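/- Let K be an algebraically closed field of characteristic 2 and c ∈ K, c ≠ 0. The quartic surface X_c = {cσ₁σ₃ + σ₄ = 0} ⊂ ℙ³(K) has exactly 10 singular points, namely the 𝔖₄-orbits of (0,0,1,1) (6 points) and (0,0,0,1) (4 points), and each singular point is a node (ordinary double point with nondegenerate quadratic tangent cone). -/

import Mathlib

open MvPolynomial

/-- The quadratic part of the Taylor expansion of `F` at the point `v` (translate and take
the degree-2 homogeneous component). -/
noncomputable def quadPart {K : Type*} [Field K] (F : MvPolynomial (Fin 4) K)
    (v : Fin 4 → K) : MvPolynomial (Fin 4) K :=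
  homogeneousComponent 2 (aeval (fun i => X i + C (v i)) F)

/-- A node (ordinary double point with nondegenerate quadratic tangent cone) in
characteristic 2: the quadratic part is `ℓ₁ℓ₂ + ℓ₃²` for linearly independent linear
forms. -/
def IsNodeAt {K : Type*} [Field K] (F : MvPolynomial (Fin 4) K) (v : Fin 4 → K) : Prop :=
  ∃ ℓ₁ ℓ₂ ℓ₃ : MvPolynomial (Fin 4) K,
    ℓ₁.IsHomogeneous 1 ∧ ℓ₂.IsHomogeneous 1 ∧ ℓ₃.IsHomogeneous 1 ∧
    LinearIndependent K ![ℓ₁, ℓ₂, ℓ₃] ∧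
    quadPart F v = ℓ₁ * ℓ₂ + ℓ₃ ^ 2

open Finset

set_option linter.unusedSectionVars false
set_option maxHeartbeats 1000000

theorem h4 : ∀ x : Fin 4, x = 0 ∨ x = 1 ∨ x = 2 ∨ x = 3 := by decide

section SXGMain
variable {K : Type*} [Field K]

theorem smul_patA (t : K) (g : Equiv.Perm (Fin 4)) :
    t • ((![0,0,1,1] : Fin 4 → K) ∘ ⇑g) = (![0,0,t,t] : Fin 4 → K) ∘ ⇑g :=
  funext fun m => by rcases h4 (g m) with h|h|h|h <;> simp [h]

theorem smul_patB (t : K) (g : Equiv.Perm (Fin 4)) :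
    t • ((![0,0,0,1] : Fin 4 → K) ∘ ⇑g) = (![0,0,0,t] : Fin 4 → K) ∘ ⇑g :=
  funext fun m => by rcases h4 (g m) with h|h|h|h <;> simp [h]


noncomputable def zpat (v : Fin 4 → K) : Fin 4 → Bool := fun i =>
  @decide (v i = 0) (Classical.propDecidable _)

def patB1 : Fin 4 → Bool := ![true,true,false,false]
def patB2 : Fin 4 → Bool := ![true,true,true,false]

def T : Finset (Fin 4 → Bool) :=
  {![true,true,false,false], ![true,false,true,false], ![true,false,false,true],
   ![false,true,true,false], ![false,true,false,true], ![false,false,true,true],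
   ![true,true,true,false], ![true,true,false,true], ![true,false,true,true],
   ![false,true,true,true]}

theorem cardT : T.card = 10 := by decide

theorem bool1 : ∀ g : Equiv.Perm (Fin 4), (patB1 ∘ ⇑g) ∈ T ∧ (patB2 ∘ ⇑g) ∈ T := by decide

theorem bool2 : ∀ b ∈ T, ∃ g : Equiv.Perm (Fin 4), b = patB1 ∘ ⇑g ∨ b = patB2 ∘ ⇑g := by decide

theorem zpatA {t : K} (ht : t ≠ 0) (g : Equiv.Perm (Fin 4)) :
    zpat (t • ((![0,0,1,1] : Fin 4 → K) ∘ ⇑g)) = patB1 ∘ ⇑g := by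
  funext i
  rcases h4 (g i) with h|h|h|h <;>
    simp [zpat, patB1, h, ht, Pi.smul_apply, smul_eq_mul]

theorem zpatB {t : K} (ht : t ≠ 0) (g : Equiv.Perm (Fin 4)) :
    zpat (t • ((![0,0,0,1] : Fin 4 → K) ∘ ⇑g)) = patB2 ∘ ⇑g := by
  funext i
  rcases h4 (g i) with h|h|h|h <;>
    simp [zpat, patB2, h, ht, Pi.smul_apply, smul_eq_mul]

def boolToK (K : Type*) [Field K] : Bool → K := fun b => if b then 0 else 1

theorem patKA_eq (g : Equiv.Perm (Fin 4)) :
    (![0,0,1,1] : Fin 4 → K) ∘ ⇑g = boolToK K ∘ (patB1 ∘ ⇑g) := by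
  funext i; rcases h4 (g i) with h|h|h|h <;> simp [boolToK, patB1, h]

theorem patKB_eq (g : Equiv.Perm (Fin 4)) :
    (![0,0,0,1] : Fin 4 → K) ∘ ⇑g = boolToK K ∘ (patB2 ∘ ⇑g) := by
  funext i; rcases h4 (g i) with h|h|h|h <;> simp [boolToK, patB2, h]

theorem patKA_ne (g : Equiv.Perm (Fin 4)) : ((![0,0,1,1] : Fin 4 → K) ∘ ⇑g) ≠ 0 := by
  intro h
  have := congrFun h (g.symm 3)
  simp [Equiv.apply_symm_apply] at this

theorem patKB_ne (g : Equiv.Perm (Fin 4)) : ((![0,0,0,1] : Fin 4 → K) ∘ ⇑g) ≠ 0 := by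
  intro h
  have := congrFun h (g.symm 3)
  simp [Equiv.apply_symm_apply] at this

theorem mk_of_rep {p : Projectivization K (Fin 4 → K)} {t : K} (ht : t ≠ 0)
    {v : Fin 4 → K} (hv : v ≠ 0) (h : p.rep = t • v) :
    p = Projectivization.mk K v hv := by
  rw [← Projectivization.mk_rep p]
  apply (Projectivization.mk_eq_mk_iff K _ _ _ _).mpr
  refine ⟨Units.mk0 t ht, ?_⟩
  rw [Units.smul_def]; exact h.symm

theorem rep_of_mk {v : Fin 4 → K} (hv : v ≠ 0) :
    ∃ a : Kˣ, (Projectivization.mk K v hv).rep = (a : K) • v := by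
  obtain ⟨a, ha⟩ := (Projectivization.mk_eq_mk_iff K _ _
    (Projectivization.mk K v hv).rep_nonzero hv).mp (Projectivization.mk_rep _)
  exact ⟨a, by rw [← ha, Units.smul_def]⟩



theorem hom0mul {q p : MvPolynomial (Fin 4) K} {n : ℕ} (hq : q.IsHomogeneous 0)
    (h : p.IsHomogeneous n) : (q*p).IsHomogeneous n := zero_add n ▸ hq.mul h
theorem homC (a : K) : (C a : MvPolynomial (Fin 4) K).IsHomogeneous 0 := isHomogeneous_C _ _
theorem homX (i : Fin 4) : (X i : MvPolynomial (Fin 4) K).IsHomogeneous 1 := isHomogeneous_X _ _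
theorem homX21 (i j : Fin 4) : (X i^2 * X j : MvPolynomial (Fin 4) K).IsHomogeneous 3 :=
  ((homX i).pow 2).mul (homX j)
theorem homX12 (i j : Fin 4) : (X i * X j^2 : MvPolynomial (Fin 4) K).IsHomogeneous 3 :=
  (homX i).mul ((homX j).pow 2)
theorem homX111 (i j k : Fin 4) : (X i * X j * X k : MvPolynomial (Fin 4) K).IsHomogeneous 3 :=
  ((homX i).mul (homX j)).mul (homX k)
theorem homX1111 (i j k l : Fin 4) : (X i * X j * X k * X l : MvPolynomial (Fin 4) K).IsHomogeneous 4 :=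
  (((homX i).mul (homX j)).mul (homX k)).mul (homX l)
theorem homX211 (i j k : Fin 4) : (X i^2 * X j * X k : MvPolynomial (Fin 4) K).IsHomogeneous 4 :=
  (((homX i).pow 2).mul (homX j)).mul (homX k)
theorem homX121 (i j k : Fin 4) : (X i * X j^2 * X k : MvPolynomial (Fin 4) K).IsHomogeneous 4 :=
  ((homX i).mul ((homX j).pow 2)).mul (homX k)
theorem homX112 (i j k : Fin 4) : (X i * X j * X k^2 : MvPolynomial (Fin 4) K).IsHomogeneous 4 :=
  ((homX i).mul (homX j)).mul ((homX k).pow 2)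

noncomputable def GA3 (c t : K) : MvPolynomial (Fin 4) K :=
  C c * C t * (X 0^2 * X 2 + X 0^2 * X 3 + X 0 * X 2^2 + X 0 * X 3^2
    + X 1^2 * X 2 + X 1^2 * X 3 + X 1 * X 2^2 + X 1 * X 3^2)
  + C t * (X 0 * X 1 * X 2 + X 0 * X 1 * X 3)

noncomputable def G4 (c : K) : MvPolynomial (Fin 4) K :=
  C c * (X 0^2 * X 1 * X 2 + X 0^2 * X 1 * X 3 + X 0^2 * X 2 * X 3
    + X 0 * X 1^2 * X 2 + X 0 * X 1^2 * X 3 + X 0 * X 1 * X 2^2 + X 0 * X 1 * X 3^2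
    + X 0 * X 2^2 * X 3 + X 0 * X 2 * X 3^2 + X 1^2 * X 2 * X 3 + X 1 * X 2^2 * X 3
    + X 1 * X 2 * X 3^2)
  + X 0 * X 1 * X 2 * X 3

noncomputable def GB3 (c t : K) : MvPolynomial (Fin 4) K :=
  C c * C t * (X 0^2 * X 1 + X 0^2 * X 2 + X 0 * X 1^2 + X 0 * X 2^2
    + X 1^2 * X 2 + X 1 * X 2^2)
  + C t * (X 0 * X 1 * X 2)

theorem homGA3 (c t : K) : (GA3 c t).IsHomogeneous 3 := by
  refine IsHomogeneous.add (hom0mul ((homC c).mul (homC t)) ?_) (hom0mul (homC t) ?_)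
  · repeat' apply IsHomogeneous.add
    all_goals first | with_reducible exact homX21 _ _ | with_reducible exact homX12 _ _
  · exact (homX111 0 1 2).add (homX111 0 1 3)

theorem homG4 (c : K) : (G4 c).IsHomogeneous 4 := by
  refine IsHomogeneous.add (hom0mul (homC c) ?_) (homX1111 0 1 2 3)
  repeat' apply IsHomogeneous.add
  all_goals first | with_reducible exact homX211 _ _ _ | with_reducible exact homX121 _ _ _ | with_reducible exact homX112 _ _ _

theorem homGB3 (c t : K) : (GB3 c t).IsHomogeneous 3 := by
  refine IsHomogeneous.add (hom0mul ((homC c).mul (homC t)) ?_) (hom0mul (homC t) (homX111 0 1 2))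
  repeat' apply IsHomogeneous.add
  all_goals first | with_reducible exact homX21 _ _ | with_reducible exact homX12 _ _

theorem comp2 {L P3 P4 : MvPolynomial (Fin 4) K} (hL : L.IsHomogeneous 2)
    (h3 : P3.IsHomogeneous 3) (h4 : P4.IsHomogeneous 4) :
    homogeneousComponent 2 (L + P3 + P4) = L := by
  rw [map_add, map_add,
    homogeneousComponent_of_mem ((mem_homogeneousSubmodule _ _).mpr hL),
    homogeneousComponent_of_mem ((mem_homogeneousSubmodule _ _).mpr h3),
    homogeneousComponent_of_mem ((mem_homogeneousSubmodule _ _).mpr h4)]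
  simp

theorem mk_congr {v w : Fin 4 → K} (hv : v ≠ 0) (hw : w ≠ 0) (h : v = w) :
    Projectivization.mk K v hv = Projectivization.mk K w hw := by subst h; rfl

theorem homLA1 (c t : K) : (C t * (X 0 + C c * (X 0+X 1+X 2+X 3)) : MvPolynomial (Fin 4) K).IsHomogeneous 1 :=
  hom0mul (homC t) ((homX 0).add (hom0mul (homC c) ((((homX 0).add (homX 1)).add (homX 2)).add (homX 3))))
theorem homLA2 (c t : K) : (C t * (X 1 + C c * (X 0+X 1+X 2+X 3)) : MvPolynomial (Fin 4) K).IsHomogeneous 1 :=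
  hom0mul (homC t) ((homX 1).add (hom0mul (homC c) ((((homX 0).add (homX 1)).add (homX 2)).add (homX 3))))
theorem homLA3 (c t : K) : (C t * (C c * (X 0+X 1+X 2+X 3)) : MvPolynomial (Fin 4) K).IsHomogeneous 1 :=
  hom0mul (homC t) (hom0mul (homC c) ((((homX 0).add (homX 1)).add (homX 2)).add (homX 3)))
theorem homLB1 (c t : K) : (C c * (C t^2 * (X 0 + X 2)) : MvPolynomial (Fin 4) K).IsHomogeneous 1 :=
  hom0mul (homC c) (hom0mul ((homC t).pow 2) ((homX 0).add (homX 2)))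
theorem homLB2 : ((X 1 + X 2) : MvPolynomial (Fin 4) K).IsHomogeneous 1 :=
  (homX 1).add (homX 2)
theorem homLB3 (t r : K) : ((C t * C r) * X 2 : MvPolynomial (Fin 4) K).IsHomogeneous 1 :=
  hom0mul ((homC t).mul (homC r)) (homX 2)

theorem evalsum {l1 l2 l3 : MvPolynomial (Fin 4) K} {a : Fin 3 → K} (w : Fin 4 → K)
    (h : C (a 0) * l1 + C (a 1) * l2 + C (a 2) * l3 = 0) :
    a 0 * eval w l1 + a 1 * eval w l2 + a 2 * eval w l3 = 0 := by
  have := congrArg (eval w) h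
  simpa using this

theorem liA {c t : K} (hc : c ≠ 0) (ht : t ≠ 0) :
    LinearIndependent K ![(C t * (X 0 + C c * (X 0+X 1+X 2+X 3)) : MvPolynomial (Fin 4) K),
      C t * (X 1 + C c * (X 0+X 1+X 2+X 3)), C t * (C c * (X 0+X 1+X 2+X 3))] := by
  set l1 : MvPolynomial (Fin 4) K := C t * (X 0 + C c * (X 0+X 1+X 2+X 3)) with hl1
  set l2 : MvPolynomial (Fin 4) K := C t * (X 1 + C c * (X 0+X 1+X 2+X 3)) with hl2
  set l3 : MvPolynomial (Fin 4) K := C t * (C c * (X 0+X 1+X 2+X 3)) with hl3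
  apply Fintype.linearIndependent_iff.mpr
  intro a h
  rw [Fin.sum_univ_three] at h
  have m0 : ![l1,l2,l3] 0 = l1 := rfl
  have m1 : ![l1,l2,l3] 1 = l2 := rfl
  have m2 : ![l1,l2,l3] 2 = l3 := rfl
  rw [m0, m1, m2, smul_eq_C_mul, smul_eq_C_mul, smul_eq_C_mul] at h
  have hv1 : eval (![1,0,0,0] : Fin 4 → K) l1 = t + t * c := by rw [hl1]; simp; try ring
  have hv1' : eval (![1,0,0,0] : Fin 4 → K) l2 = t * c := by rw [hl2]; simp; try ring
  have hv1'' : eval (![1,0,0,0] : Fin 4 → K) l3 = t * c := by rw [hl3]; simp; try ring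
  have hv2 : eval (![0,1,0,0] : Fin 4 → K) l1 = t * c := by rw [hl1]; simp; try ring
  have hv2' : eval (![0,1,0,0] : Fin 4 → K) l2 = t + t * c := by rw [hl2]; simp; try ring
  have hv2'' : eval (![0,1,0,0] : Fin 4 → K) l3 = t * c := by rw [hl3]; simp; try ring
  have hv3 : eval (![0,0,0,1] : Fin 4 → K) l1 = t * c := by rw [hl1]; simp; try ring
  have hv3' : eval (![0,0,0,1] : Fin 4 → K) l2 = t * c := by rw [hl2]; simp; try ring
  have hv3'' : eval (![0,0,0,1] : Fin 4 → K) l3 = t * c := by rw [hl3]; simp; try ring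
  have e1 := evalsum (![1,0,0,0] : Fin 4 → K) h
  have e2 := evalsum (![0,1,0,0] : Fin 4 → K) h
  have e3 := evalsum (![0,0,0,1] : Fin 4 → K) h
  rw [hv1, hv1', hv1''] at e1
  rw [hv2, hv2', hv2''] at e2
  rw [hv3, hv3', hv3''] at e3
  have ha0 : a 0 = 0 := by
    have : a 0 * t = 0 := by linear_combination e1 - e3
    exact (mul_eq_zero.mp this).resolve_right ht
  have ha1 : a 1 = 0 := by
    have : a 1 * t = 0 := by linear_combination e2 - e3
    exact (mul_eq_zero.mp this).resolve_right ht
  have ha2 : a 2 = 0 := by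
    have : a 2 * (t * c) = 0 := by linear_combination e3 - (t*c)*ha0 - (t*c)*ha1
    exact (mul_eq_zero.mp this).resolve_right (mul_ne_zero ht hc)
  intro i
  rcases (by decide : ∀ x : Fin 3, x = 0 ∨ x = 1 ∨ x = 2) i with rfl|rfl|rfl <;> assumption

theorem liB {c t r : K} (hc : c ≠ 0) (ht : t ≠ 0) (hr : r^2 = c) :
    LinearIndependent K ![(C c * (C t^2 * (X 0 + X 2)) : MvPolynomial (Fin 4) K),
      X 1 + X 2, (C t * C r) * X 2] := by
  have hrne : r ≠ 0 := fun h => hc (by rw [← hr, h]; ring)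
  set l1 : MvPolynomial (Fin 4) K := C c * (C t^2 * (X 0 + X 2)) with hl1
  set l2 : MvPolynomial (Fin 4) K := X 1 + X 2 with hl2
  set l3 : MvPolynomial (Fin 4) K := (C t * C r) * X 2 with hl3
  apply Fintype.linearIndependent_iff.mpr
  intro a h
  rw [Fin.sum_univ_three] at h
  have m0 : ![l1,l2,l3] 0 = l1 := rfl
  have m1 : ![l1,l2,l3] 1 = l2 := rfl
  have m2 : ![l1,l2,l3] 2 = l3 := rfl
  rw [m0, m1, m2, smul_eq_C_mul, smul_eq_C_mul, smul_eq_C_mul] at h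
  have hv1 : eval (![1,0,0,0] : Fin 4 → K) l1 = c * t^2 := by rw [hl1]; simp
  have hv1' : eval (![1,0,0,0] : Fin 4 → K) l2 = 0 := by rw [hl2]; simp
  have hv1'' : eval (![1,0,0,0] : Fin 4 → K) l3 = 0 := by rw [hl3]; simp
  have hv2 : eval (![0,1,0,0] : Fin 4 → K) l1 = 0 := by rw [hl1]; simp
  have hv2' : eval (![0,1,0,0] : Fin 4 → K) l2 = 1 := by rw [hl2]; simp
  have hv2'' : eval (![0,1,0,0] : Fin 4 → K) l3 = 0 := by rw [hl3]; simp
  have hv3 : eval (![0,0,1,0] : Fin 4 → K) l1 = c * t^2 := by rw [hl1]; simp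
  have hv3' : eval (![0,0,1,0] : Fin 4 → K) l2 = 1 := by rw [hl2]; simp
  have hv3'' : eval (![0,0,1,0] : Fin 4 → K) l3 = t * r := by rw [hl3]; simp
  have e1 := evalsum (![1,0,0,0] : Fin 4 → K) h
  have e2 := evalsum (![0,1,0,0] : Fin 4 → K) h
  have e3 := evalsum (![0,0,1,0] : Fin 4 → K) h
  rw [hv1, hv1', hv1''] at e1
  rw [hv2, hv2', hv2''] at e2
  rw [hv3, hv3', hv3''] at e3
  have ha0 : a 0 = 0 := by
    have : a 0 * (c * t^2) = 0 := by linear_combination e1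
    exact (mul_eq_zero.mp this).resolve_right (mul_ne_zero hc (pow_ne_zero 2 ht))
  have ha1 : a 1 = 0 := by linear_combination e2
  have ha2 : a 2 = 0 := by
    have : a 2 * (t * r) = 0 := by linear_combination e3 - (c*t^2)*ha0 - ha1
    exact (mul_eq_zero.mp this).resolve_right (mul_ne_zero ht hrne)
  intro i
  rcases (by decide : ∀ x : Fin 3, x = 0 ∨ x = 1 ∨ x = 2) i with rfl|rfl|rfl <;> assumption

theorem e1 : esymm (Fin 4) K 1 = X 0 + X 1 + X 2 + X 3 := by
  rw [esymm, show (powersetCard 1 (univ : Finset (Fin 4))) = {{0},{1},{2},{3}} from by decide]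
  simp [Finset.sum_insert, Finset.prod_singleton]; ring

theorem e3 : esymm (Fin 4) K 3 = X 0 * X 1 * X 2 + X 0 * X 1 * X 3 + X 0 * X 2 * X 3 + X 1 * X 2 * X 3 := by
  rw [esymm, show (powersetCard 3 (univ : Finset (Fin 4))) = {{0,1,2},{0,1,3},{0,2,3},{1,2,3}} from by decide]
  rw [Finset.sum_insert (by decide), Finset.sum_insert (by decide), Finset.sum_insert (by decide), Finset.sum_singleton]
  rw [show ({0,1,2} : Finset (Fin 4)) = insert 0 (insert 1 {2}) from rfl,
      show ({0,1,3} : Finset (Fin 4)) = insert 0 (insert 1 {3}) from rfl,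
      show ({0,2,3} : Finset (Fin 4)) = insert 0 (insert 2 {3}) from rfl,
      show ({1,2,3} : Finset (Fin 4)) = insert 1 (insert 2 {3}) from rfl]
  repeat rw [Finset.prod_insert (by decide)]
  repeat rw [Finset.prod_singleton]
  ring

theorem e4 : esymm (Fin 4) K 4 = X 0 * X 1 * X 2 * X 3 := by
  rw [esymm, show (powersetCard 4 (univ : Finset (Fin 4))) = {{0,1,2,3}} from by decide]
  rw [Finset.sum_singleton, show ({0,1,2,3} : Finset (Fin 4)) = insert 0 (insert 1 (insert 2 {3})) from rfl]
  repeat rw [Finset.prod_insert (by decide)]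
  rw [Finset.prod_singleton]; ring



def Concl (v : Fin 4 → K) : Prop :=
  ∃ (g : Equiv.Perm (Fin 4)) (t : K), t ≠ 0 ∧
    (v = t • ((![0, 0, 1, 1] : Fin 4 → K) ∘ g) ∨ v = t • ((![0, 0, 0, 1] : Fin 4 → K) ∘ g))

theorem finish1 (v : Fin 4 → K) (f s : Fin 4 → Fin 4) (hfs : ∀ x, s (f x) = x)
    (hsf : ∀ x, f (s x) = x) (h0 : v (s 0) = 0) (h1 : v (s 1) = 0)
    (heq : v (s 2) = v (s 3)) (hne : v (s 3) ≠ 0) : Concl v := by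
  refine ⟨⟨f, s, hfs, hsf⟩, v (s 3), hne, Or.inl (funext fun m => ?_)⟩
  have hm : m = s (f m) := (hfs m).symm
  rcases h4 (f m) with h|h|h|h <;> rw [hm, h] <;>
    simp [hsf, h0, h1, heq, Equiv.coe_fn_mk]

theorem finish2 (v : Fin 4 → K) (f s : Fin 4 → Fin 4) (hfs : ∀ x, s (f x) = x)
    (hsf : ∀ x, f (s x) = x) (h0 : v (s 0) = 0) (h1 : v (s 1) = 0)
    (h2 : v (s 2) = 0) (hne : v (s 3) ≠ 0) : Concl v := by
  refine ⟨⟨f, s, hfs, hsf⟩, v (s 3), hne, Or.inr (funext fun m => ?_)⟩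
  have hm : m = s (f m) := (hfs m).symm
  rcases h4 (f m) with h|h|h|h <;> rw [hm, h] <;>
    simp [hsf, h0, h1, h2, Equiv.coe_fn_mk]


theorem pair01 (v : Fin 4 → K) (hv : v ≠ 0) (hc2 : (2:K) = 0)
    (ha : v 0 = 0) (hb : v 1 = 0) (hkey : (v 2 + v 3) * (v 2 * v 3) = 0) : Concl v := by
  rcases mul_eq_zero.mp hkey with h|h
  · have heq : v 2 = v 3 := by linear_combination h - v 3 * hc2
    have hne : v 3 ≠ 0 := fun h3 => hv (funext fun m => by
      rcases h4 m with rfl|rfl|rfl|rfl <;> simp [ha, hb, heq, h3])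
    exact finish1 v ![0,1,2,3] ![0,1,2,3] (by decide) (by decide) ha hb heq hne
  · rcases mul_eq_zero.mp h with h'|h'
    · have hne : v 3 ≠ 0 := fun h3 => hv (funext fun m => by
        rcases h4 m with rfl|rfl|rfl|rfl <;> simp [ha, hb, h', h3])
      exact finish2 v ![0,1,2,3] ![0,1,2,3] (by decide) (by decide) ha hb h' hne
    · have hne : v 2 ≠ 0 := fun h3 => hv (funext fun m => by
        rcases h4 m with rfl|rfl|rfl|rfl <;> simp [ha, hb, h', h3])
      exact finish2 v ![0,1,3,2] ![0,1,3,2] (by decide) (by decide) ha hb h' hne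

theorem pair02 (v : Fin 4 → K) (hv : v ≠ 0) (hc2 : (2:K) = 0)
    (ha : v 0 = 0) (hb : v 2 = 0) (hkey : (v 1 + v 3) * (v 1 * v 3) = 0) : Concl v := by
  rcases mul_eq_zero.mp hkey with h|h
  · have heq : v 1 = v 3 := by linear_combination h - v 3 * hc2
    have hne : v 3 ≠ 0 := fun h3 => hv (funext fun m => by
      rcases h4 m with rfl|rfl|rfl|rfl <;> simp [ha, hb, heq, h3])
    exact finish1 v ![0,2,1,3] ![0,2,1,3] (by decide) (by decide) ha hb heq hne
  · rcases mul_eq_zero.mp h with h'|h'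
    · have hne : v 3 ≠ 0 := fun h3 => hv (funext fun m => by
        rcases h4 m with rfl|rfl|rfl|rfl <;> simp [ha, hb, h', h3])
      exact finish2 v ![0,2,1,3] ![0,2,1,3] (by decide) (by decide) ha hb h' hne
    · have hne : v 1 ≠ 0 := fun h3 => hv (funext fun m => by
        rcases h4 m with rfl|rfl|rfl|rfl <;> simp [ha, hb, h', h3])
      exact finish2 v ![0,3,1,2] ![0,2,3,1] (by decide) (by decide) ha hb h' hne

theorem pair03 (v : Fin 4 → K) (hv : v ≠ 0) (hc2 : (2:K) = 0)
    (ha : v 0 = 0) (hb : v 3 = 0) (hkey : (v 1 + v 2) * (v 1 * v 2) = 0) : Concl v := by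
  rcases mul_eq_zero.mp hkey with h|h
  · have heq : v 1 = v 2 := by linear_combination h - v 2 * hc2
    have hne : v 2 ≠ 0 := fun h3 => hv (funext fun m => by
      rcases h4 m with rfl|rfl|rfl|rfl <;> simp [ha, hb, heq, h3])
    exact finish1 v ![0,2,3,1] ![0,3,1,2] (by decide) (by decide) ha hb heq hne
  · rcases mul_eq_zero.mp h with h'|h'
    · have hne : v 2 ≠ 0 := fun h3 => hv (funext fun m => by
        rcases h4 m with rfl|rfl|rfl|rfl <;> simp [ha, hb, h', h3])
      exact finish2 v ![0,2,3,1] ![0,3,1,2] (by decide) (by decide) ha hb h' hne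
    · have hne : v 1 ≠ 0 := fun h3 => hv (funext fun m => by
        rcases h4 m with rfl|rfl|rfl|rfl <;> simp [ha, hb, h', h3])
      exact finish2 v ![0,3,2,1] ![0,3,2,1] (by decide) (by decide) ha hb h' hne

theorem pair12 (v : Fin 4 → K) (hv : v ≠ 0) (hc2 : (2:K) = 0)
    (ha : v 1 = 0) (hb : v 2 = 0) (hkey : (v 0 + v 3) * (v 0 * v 3) = 0) : Concl v := by
  rcases mul_eq_zero.mp hkey with h|h
  · have heq : v 0 = v 3 := by linear_combination h - v 3 * hc2
    have hne : v 3 ≠ 0 := fun h3 => hv (funext fun m => by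
      rcases h4 m with rfl|rfl|rfl|rfl <;> simp [ha, hb, heq, h3])
    exact finish1 v ![2,0,1,3] ![1,2,0,3] (by decide) (by decide) ha hb heq hne
  · rcases mul_eq_zero.mp h with h'|h'
    · have hne : v 3 ≠ 0 := fun h3 => hv (funext fun m => by
        rcases h4 m with rfl|rfl|rfl|rfl <;> simp [ha, hb, h', h3])
      exact finish2 v ![2,0,1,3] ![1,2,0,3] (by decide) (by decide) ha hb h' hne
    · have hne : v 0 ≠ 0 := fun h3 => hv (funext fun m => by
        rcases h4 m with rfl|rfl|rfl|rfl <;> simp [ha, hb, h', h3])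
      exact finish2 v ![3,0,1,2] ![1,2,3,0] (by decide) (by decide) ha hb h' hne

theorem pair13 (v : Fin 4 → K) (hv : v ≠ 0) (hc2 : (2:K) = 0)
    (ha : v 1 = 0) (hb : v 3 = 0) (hkey : (v 0 + v 2) * (v 0 * v 2) = 0) : Concl v := by
  rcases mul_eq_zero.mp hkey with h|h
  · have heq : v 0 = v 2 := by linear_combination h - v 2 * hc2
    have hne : v 2 ≠ 0 := fun h3 => hv (funext fun m => by
      rcases h4 m with rfl|rfl|rfl|rfl <;> simp [ha, hb, heq, h3])
    exact finish1 v ![2,0,3,1] ![1,3,0,2] (by decide) (by decide) ha hb heq hne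
  · rcases mul_eq_zero.mp h with h'|h'
    · have hne : v 2 ≠ 0 := fun h3 => hv (funext fun m => by
        rcases h4 m with rfl|rfl|rfl|rfl <;> simp [ha, hb, h', h3])
      exact finish2 v ![2,0,3,1] ![1,3,0,2] (by decide) (by decide) ha hb h' hne
    · have hne : v 0 ≠ 0 := fun h3 => hv (funext fun m => by
        rcases h4 m with rfl|rfl|rfl|rfl <;> simp [ha, hb, h', h3])
      exact finish2 v ![3,0,2,1] ![1,3,2,0] (by decide) (by decide) ha hb h' hne

theorem pair23 (v : Fin 4 → K) (hv : v ≠ 0) (hc2 : (2:K) = 0)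
    (ha : v 2 = 0) (hb : v 3 = 0) (hkey : (v 0 + v 1) * (v 0 * v 1) = 0) : Concl v := by
  rcases mul_eq_zero.mp hkey with h|h
  · have heq : v 0 = v 1 := by linear_combination h - v 1 * hc2
    have hne : v 1 ≠ 0 := fun h3 => hv (funext fun m => by
      rcases h4 m with rfl|rfl|rfl|rfl <;> simp [ha, hb, heq, h3])
    exact finish1 v ![2,3,0,1] ![2,3,0,1] (by decide) (by decide) ha hb heq hne
  · rcases mul_eq_zero.mp h with h'|h'
    · have hne : v 1 ≠ 0 := fun h3 => hv (funext fun m => by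
        rcases h4 m with rfl|rfl|rfl|rfl <;> simp [ha, hb, h', h3])
      exact finish2 v ![2,3,0,1] ![2,3,0,1] (by decide) (by decide) ha hb h' hne
    · have hne : v 0 ≠ 0 := fun h3 => hv (funext fun m => by
        rcases h4 m with rfl|rfl|rfl|rfl <;> simp [ha, hb, h', h3])
      exact finish2 v ![3,2,0,1] ![2,3,1,0] (by decide) (by decide) ha hb h' hne

variable {c : K} {F : MvPolynomial (Fin 4) K}
  (hF : F = C c * esymm (Fin 4) K 1 * esymm (Fin 4) K 3 + esymm (Fin 4) K 4)
include hF

theorem evalF (v : Fin 4 → K) :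
    eval v F = c * (v 0 + v 1 + v 2 + v 3) * (v 0*v 1*v 2 + v 0*v 1*v 3 + v 0*v 2*v 3 + v 1*v 2*v 3) + v 0*v 1*v 2*v 3 := by
  rw [hF, e1, e3, e4]; simp; try ring

theorem evalD0 (v : Fin 4 → K) :
    eval v (pderiv 0 F) = c * (v 0*v 1*v 2 + v 0*v 1*v 3 + v 0*v 2*v 3 + v 1*v 2*v 3)
      + c * (v 0 + v 1 + v 2 + v 3) * (v 1*v 2 + v 1*v 3 + v 2*v 3) + v 1*v 2*v 3 := by
  rw [hF, e1, e3, e4]; simp [pderiv_mul, pderiv_X]; ring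

theorem evalD1 (v : Fin 4 → K) :
    eval v (pderiv 1 F) = c * (v 0*v 1*v 2 + v 0*v 1*v 3 + v 0*v 2*v 3 + v 1*v 2*v 3)
      + c * (v 0 + v 1 + v 2 + v 3) * (v 0*v 2 + v 0*v 3 + v 2*v 3) + v 0*v 2*v 3 := by
  rw [hF, e1, e3, e4]; simp [pderiv_mul, pderiv_X]; ring

theorem evalD2 (v : Fin 4 → K) :
    eval v (pderiv 2 F) = c * (v 0*v 1*v 2 + v 0*v 1*v 3 + v 0*v 2*v 3 + v 1*v 2*v 3)
      + c * (v 0 + v 1 + v 2 + v 3) * (v 0*v 1 + v 0*v 3 + v 1*v 3) + v 0*v 1*v 3 := by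
  rw [hF, e1, e3, e4]; simp [pderiv_mul, pderiv_X]; ring

theorem evalD3 (v : Fin 4 → K) :
    eval v (pderiv 3 F) = c * (v 0*v 1*v 2 + v 0*v 1*v 3 + v 0*v 2*v 3 + v 1*v 2*v 3)
      + c * (v 0 + v 1 + v 2 + v 3) * (v 0*v 1 + v 0*v 2 + v 1*v 2) + v 0*v 1*v 2 := by
  rw [hF, e1, e3, e4]; simp [pderiv_mul, pderiv_X]; ring


theorem classify (hc : c ≠ 0) (hc2 : (2:K) = 0) (v : Fin 4 → K) (hv : v ≠ 0)
    (h0 : eval v F = 0) (hd : ∀ i, eval v (pderiv i F) = 0) : Concl v := by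
  have hE0 : c * (v 0*v 1*v 2 + v 0*v 1*v 3 + v 0*v 2*v 3 + v 1*v 2*v 3)
      + c * (v 0 + v 1 + v 2 + v 3) * (v 1*v 2 + v 1*v 3 + v 2*v 3) + v 1*v 2*v 3 = 0 := by
    rw [← evalD0 hF v]; exact hd 0
  have hE1 : c * (v 0*v 1*v 2 + v 0*v 1*v 3 + v 0*v 2*v 3 + v 1*v 2*v 3)
      + c * (v 0 + v 1 + v 2 + v 3) * (v 0*v 2 + v 0*v 3 + v 2*v 3) + v 0*v 2*v 3 = 0 := by
    rw [← evalD1 hF v]; exact hd 1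
  have hE2 : c * (v 0*v 1*v 2 + v 0*v 1*v 3 + v 0*v 2*v 3 + v 1*v 2*v 3)
      + c * (v 0 + v 1 + v 2 + v 3) * (v 0*v 1 + v 0*v 3 + v 1*v 3) + v 0*v 1*v 3 = 0 := by
    rw [← evalD2 hF v]; exact hd 2
  have hE3 : c * (v 0*v 1*v 2 + v 0*v 1*v 3 + v 0*v 2*v 3 + v 1*v 2*v 3)
      + c * (v 0 + v 1 + v 2 + v 3) * (v 0*v 1 + v 0*v 2 + v 1*v 2) + v 0*v 1*v 2 = 0 := by
    rw [← evalD3 hF v]; exact hd 3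
  have hF0 : c * (v 0 + v 1 + v 2 + v 3) * (v 0*v 1*v 2 + v 0*v 1*v 3 + v 0*v 2*v 3 + v 1*v 2*v 3) + v 0*v 1*v 2*v 3 = 0 := by
    rw [← evalF hF v]; exact h0
  have hσ3 : v 0*v 1*v 2 + v 0*v 1*v 3 + v 0*v 2*v 3 + v 1*v 2*v 3 = 0 := by
    linear_combination hE0 + hE1 + hE2 + hE3
      - (2*c*(v 0*v 1*v 2 + v 0*v 1*v 3 + v 0*v 2*v 3 + v 1*v 2*v 3)
        + c*(v 0+v 1+v 2+v 3)*(v 0*v 1+v 0*v 2+v 0*v 3+v 1*v 2+v 1*v 3+v 2*v 3)) * hc2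
  have hσ4 : v 0*v 1*v 2*v 3 = 0 := by
    linear_combination hF0 - c*(v 0 + v 1 + v 2 + v 3) * hσ3
  rcases mul_eq_zero.mp hσ4 with h012|hz3
  · rcases mul_eq_zero.mp h012 with h01|hz2
    · rcases mul_eq_zero.mp h01 with hz0|hz1
      · -- v 0 = 0
        have hrest : v 1 * (v 2 * v 3) = 0 := by
          linear_combination hσ3 - (v 1*v 2 + v 1*v 3 + v 2*v 3) * hz0
        rcases mul_eq_zero.mp hrest with hz1|h23
        · have hE := hE0; rw [hz0, hz1] at hE
          have hck : c * ((v 2 + v 3) * (v 2 * v 3)) = 0 := by linear_combination hE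
          exact pair01 v hv hc2 hz0 hz1 ((mul_eq_zero.mp hck).resolve_left hc)
        · rcases mul_eq_zero.mp h23 with hz2|hz3
          · have hE := hE0; rw [hz0, hz2] at hE
            have hck : c * ((v 1 + v 3) * (v 1 * v 3)) = 0 := by linear_combination hE
            exact pair02 v hv hc2 hz0 hz2 ((mul_eq_zero.mp hck).resolve_left hc)
          · have hE := hE0; rw [hz0, hz3] at hE
            have hck : c * ((v 1 + v 2) * (v 1 * v 2)) = 0 := by linear_combination hE
            exact pair03 v hv hc2 hz0 hz3 ((mul_eq_zero.mp hck).resolve_left hc)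
      · -- v 1 = 0
        have hrest : v 0 * (v 2 * v 3) = 0 := by
          linear_combination hσ3 - (v 0*v 2 + v 0*v 3 + v 2*v 3) * hz1
        rcases mul_eq_zero.mp hrest with hz0|h23
        · have hE := hE0; rw [hz0, hz1] at hE
          have hck : c * ((v 2 + v 3) * (v 2 * v 3)) = 0 := by linear_combination hE
          exact pair01 v hv hc2 hz0 hz1 ((mul_eq_zero.mp hck).resolve_left hc)
        · rcases mul_eq_zero.mp h23 with hz2|hz3
          · have hE := hE1; rw [hz1, hz2] at hE
            have hck : c * ((v 0 + v 3) * (v 0 * v 3)) = 0 := by linear_combination hE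
            exact pair12 v hv hc2 hz1 hz2 ((mul_eq_zero.mp hck).resolve_left hc)
          · have hE := hE1; rw [hz1, hz3] at hE
            have hck : c * ((v 0 + v 2) * (v 0 * v 2)) = 0 := by linear_combination hE
            exact pair13 v hv hc2 hz1 hz3 ((mul_eq_zero.mp hck).resolve_left hc)
    · -- v 2 = 0
      have hrest : v 0 * (v 1 * v 3) = 0 := by
        linear_combination hσ3 - (v 0*v 1 + v 0*v 3 + v 1*v 3) * hz2
      rcases mul_eq_zero.mp hrest with hz0|h13
      · have hE := hE0; rw [hz0, hz2] at hE
        have hck : c * ((v 1 + v 3) * (v 1 * v 3)) = 0 := by linear_combination hE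
        exact pair02 v hv hc2 hz0 hz2 ((mul_eq_zero.mp hck).resolve_left hc)
      · rcases mul_eq_zero.mp h13 with hz1|hz3
        · have hE := hE1; rw [hz1, hz2] at hE
          have hck : c * ((v 0 + v 3) * (v 0 * v 3)) = 0 := by linear_combination hE
          exact pair12 v hv hc2 hz1 hz2 ((mul_eq_zero.mp hck).resolve_left hc)
        · have hE := hE2; rw [hz2, hz3] at hE
          have hck : c * ((v 0 + v 1) * (v 0 * v 1)) = 0 := by linear_combination hE
          exact pair23 v hv hc2 hz2 hz3 ((mul_eq_zero.mp hck).resolve_left hc)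
  · -- v 3 = 0
    have hrest : v 0 * (v 1 * v 2) = 0 := by
      linear_combination hσ3 - (v 0*v 1 + v 0*v 2 + v 1*v 2) * hz3
    rcases mul_eq_zero.mp hrest with hz0|h12
    · have hE := hE0; rw [hz0, hz3] at hE
      have hck : c * ((v 1 + v 2) * (v 1 * v 2)) = 0 := by linear_combination hE
      exact pair03 v hv hc2 hz0 hz3 ((mul_eq_zero.mp hck).resolve_left hc)
    · rcases mul_eq_zero.mp h12 with hz1|hz2
      · have hE := hE1; rw [hz1, hz3] at hE
        have hck : c * ((v 0 + v 2) * (v 0 * v 2)) = 0 := by linear_combination hE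
        exact pair13 v hv hc2 hz1 hz3 ((mul_eq_zero.mp hck).resolve_left hc)
      · have hE := hE2; rw [hz2, hz3] at hE
        have hck : c * ((v 0 + v 1) * (v 0 * v 1)) = 0 := by linear_combination hE
        exact pair23 v hv hc2 hz2 hz3 ((mul_eq_zero.mp hck).resolve_left hc)


include hF

theorem hsymF (g : Equiv.Perm (Fin 4)) : rename (⇑g) F = F := by
  rw [hF]; simp only [map_add, map_mul, rename_C]
  rw [esymm_isSymmetric (Fin 4) K 1 g, esymm_isSymmetric (Fin 4) K 3 g,
    esymm_isSymmetric (Fin 4) K 4 g]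

theorem eval_perm (g : Equiv.Perm (Fin 4)) (w : Fin 4 → K) :
    eval (w ∘ ⇑g) F = eval w F := by
  conv_rhs => rw [← hsymF hF g]
  rw [eval_rename]

theorem evalD_perm (g : Equiv.Perm (Fin 4)) (w : Fin 4 → K) (i : Fin 4) :
    eval (w ∘ ⇑g) (pderiv i F) = eval w (pderiv (g i) F) := by
  have h1 := pderiv_rename (f := ⇑g.symm) g.symm.injective (g i) F
  rw [Equiv.symm_apply_apply, hsymF hF g.symm] at h1
  rw [h1, eval_rename, show (w ∘ ⇑g) ∘ ⇑g.symm = w from funext fun m => by simp]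


theorem singA (hc2 : (2:K) = 0) (t : K) :
    eval (![0,0,t,t] : Fin 4 → K) F = 0 ∧
      ∀ j, eval (![0,0,t,t] : Fin 4 → K) (pderiv j F) = 0 := by
  have w0 : (![0,0,t,t] : Fin 4 → K) 0 = 0 := rfl
  have w1 : (![0,0,t,t] : Fin 4 → K) 1 = 0 := rfl
  have w2 : (![0,0,t,t] : Fin 4 → K) 2 = t := rfl
  have w3 : (![0,0,t,t] : Fin 4 → K) 3 = t := rfl
  constructor
  · rw [evalF hF, w0, w1, w2, w3]; ring
  · intro j
    rcases h4 j with hj|hj|hj|hj <;> subst hj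
    · rw [evalD0 hF, w0, w1, w2, w3]; linear_combination (c * t^3) * hc2
    · rw [evalD1 hF, w0, w1, w2, w3]; linear_combination (c * t^3) * hc2
    · rw [evalD2 hF, w0, w1, w2, w3]; ring
    · rw [evalD3 hF, w0, w1, w2, w3]; ring

theorem singB (t : K) :
    eval (![0,0,0,t] : Fin 4 → K) F = 0 ∧
      ∀ j, eval (![0,0,0,t] : Fin 4 → K) (pderiv j F) = 0 := by
  have w0 : (![0,0,0,t] : Fin 4 → K) 0 = 0 := rfl
  have w1 : (![0,0,0,t] : Fin 4 → K) 1 = 0 := rfl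
  have w2 : (![0,0,0,t] : Fin 4 → K) 2 = 0 := rfl
  have w3 : (![0,0,0,t] : Fin 4 → K) 3 = t := rfl
  constructor
  · rw [evalF hF, w0, w1, w2, w3]; ring
  · intro j
    rcases h4 j with hj|hj|hj|hj <;> subst hj <;>
      [rw [evalD0 hF, w0, w1, w2, w3]; rw [evalD1 hF, w0, w1, w2, w3];
       rw [evalD2 hF, w0, w1, w2, w3]; rw [evalD3 hF, w0, w1, w2, w3]] <;> ring

theorem sing_of (hc2 : (2:K) = 0) (v : Fin 4 → K) (g : Equiv.Perm (Fin 4)) (t : K)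
    (h : v = t • ((![0, 0, 1, 1] : Fin 4 → K) ∘ ⇑g) ∨ v = t • ((![0, 0, 0, 1] : Fin 4 → K) ∘ ⇑g)) :
    eval v F = 0 ∧ ∀ i, eval v (pderiv i F) = 0 := by
  rcases h with h|h
  · have hv : v = (![0,0,t,t] : Fin 4 → K) ∘ ⇑g := by rw [h, smul_patA]
    refine ⟨?_, fun i => ?_⟩
    · rw [hv, eval_perm hF]; exact (singA hF hc2 t).1
    · rw [hv, evalD_perm hF]; exact (singA hF hc2 t).2 _
  · have hv : v = (![0,0,0,t] : Fin 4 → K) ∘ ⇑g := by rw [h, smul_patB]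
    refine ⟨?_, fun i => ?_⟩
    · rw [hv, eval_perm hF]; exact (singB hF t).1
    · rw [hv, evalD_perm hF]; exact (singB hF t).2 _

theorem decompA (hc2 : (2:K) = 0) (t : K) :
    aeval (fun i => X i + C ((![0,0,t,t] : Fin 4 → K) i)) F
      = (C t * (X 0 + C c * (X 0+X 1+X 2+X 3))) * (C t * (X 1 + C c * (X 0+X 1+X 2+X 3)))
        + (C t * (C c * (X 0+X 1+X 2+X 3)))^2 + GA3 c t + G4 c := by
  have h2M : (2 : MvPolynomial (Fin 4) K) = 0 := by
    rw [← map_ofNat (C : K →+* MvPolynomial (Fin 4) K) 2, hc2, map_zero]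
  have w0 : (![0,0,t,t] : Fin 4 → K) 0 = 0 := rfl
  have w1 : (![0,0,t,t] : Fin 4 → K) 1 = 0 := rfl
  have w2 : (![0,0,t,t] : Fin 4 → K) 2 = t := rfl
  have w3 : (![0,0,t,t] : Fin 4 → K) 3 = t := rfl
  rw [hF, e1, e3, e4, GA3, G4]
  simp only [map_add, map_mul, aeval_X, aeval_C, algebraMap_eq, w0, w1, w2, w3, map_zero, add_zero]
  linear_combination (X 0^2 * X 1 * C c * C t + (-1 : MvPolynomial (Fin 4) K) * X 0^2 * C c^2 * C t^2 + X 0 * X 1^2 * C c * C t + (2 : MvPolynomial (Fin 4) K) * X 0 * X 1 * X 2 * X 3 * C c + (3 : MvPolynomial (Fin 4) K) * X 0 * X 1 * X 2 * C c * C t + (3 : MvPolynomial (Fin 4) K) * X 0 * X 1 * X 3 * C c * C t + (-2 : MvPolynomial (Fin 4) K) * X 0 * X 1 * C c^2 * C t^2 + (2 : MvPolynomial (Fin 4) K) * X 0 * X 1 * C c * C t^2 + (2 : MvPolynomial (Fin 4) K) * X 0 * X 2 * X 3 * C c * C t + (-2 : MvPolynomial (Fin 4) K) * X 0 * X 2 *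 C c^2 * C t^2 + X 0 * X 2 * C c * C t^2 + (-2 : MvPolynomial (Fin 4) K) * X 0 * X 3 * C c^2 * C t^2 + X 0 * X 3 * C c * C t^2 + X 0 * C c * C t^3 + (-1 : MvPolynomial (Fin 4) K) * X 1^2 * C c^2 * C t^2 + (2 : MvPolynomial (Fin 4) K) * X 1 * X 2 * X 3 * C c * C t + (-2 : MvPolynomial (Fin 4) K) * X 1 * X 2 * C c^2 * C t^2 + X 1 * X 2 * C c * C t^2 + (-2 : MvPolynomial (Fin 4) K) * X 1 * X 3 * C c^2 * C t^2 + X 1 * X 3 * C c * C t^2 + X 1 * C c * C t^3 + (-1 : MvPolynomial (Fin 4) K) * X 2^2 * C c^2 * C t^2 + (-2 : MvPolynomial (Fin 4) K) * X 2 * X 3 * C c^2 * C t^2 + (-1 : MvPolynomial (Fin 4) K) * X 3^2 * C c^2 * C t^2) * h2M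

theorem decompB (hc2 : (2:K) = 0) (t r : K) (hr : r^2 = c) :
    aeval (fun i => X i + C ((![0,0,0,t] : Fin 4 → K) i)) F
      = (C c * (C t^2 * (X 0 + X 2))) * (X 1 + X 2)
        + ((C t * C r) * X 2)^2 + GB3 c t + G4 c := by
  have h2M : (2 : MvPolynomial (Fin 4) K) = 0 := by
    rw [← map_ofNat (C : K →+* MvPolynomial (Fin 4) K) 2, hc2, map_zero]
  have hCr : (C r : MvPolynomial (Fin 4) K)^2 = C c := by rw [← map_pow, hr]
  have w0 : (![0,0,0,t] : Fin 4 → K) 0 = 0 := rfl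
  have w1 : (![0,0,0,t] : Fin 4 → K) 1 = 0 := rfl
  have w2 : (![0,0,0,t] : Fin 4 → K) 2 = 0 := rfl
  have w3 : (![0,0,0,t] : Fin 4 → K) 3 = t := rfl
  rw [hF, e1, e3, e4, GB3, G4]
  simp only [map_add, map_mul, aeval_X, aeval_C, algebraMap_eq, w0, w1, w2, w3, map_zero, add_zero]
  linear_combination ((2 : MvPolynomial (Fin 4) K) * X 0 * X 1 * X 2 * X 3 * C c + (2 : MvPolynomial (Fin 4) K) * X 0 * X 1 * X 2 * C c * C t + X 0 * X 1 * X 3 * C c * C t + X 0 * X 2 * X 3 * C c * C t + X 1 * X 2 * X 3 * C c * C t + (-1 : MvPolynomial (Fin 4) K) * X 2^2 * C c * C t^2) * h2M + ((-1 : MvPolynomial (Fin 4) K) * X 2^2 * C t^2) * hCr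


theorem node_transfer (w : Fin 4 → K) (g : Equiv.Perm (Fin 4))
    (l1 l2 l3 P3 P4 : MvPolynomial (Fin 4) K)
    (h1 : l1.IsHomogeneous 1) (h2 : l2.IsHomogeneous 1) (h3 : l3.IsHomogeneous 1)
    (hP3 : P3.IsHomogeneous 3) (hP4 : P4.IsHomogeneous 4)
    (hli : LinearIndependent K ![l1, l2, l3])
    (hdec : aeval (fun i => X i + C (w i)) F = l1 * l2 + l3 ^ 2 + P3 + P4) :
    IsNodeAt F (w ∘ ⇑g) := by
  have step1 : rename ⇑g.symm (aeval (fun i => X i + C (w i)) F)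
      = aeval (fun i => X (g.symm i) + C (w i)) F := by
    rw [← AlgHom.comp_apply, comp_aeval]
    rw [show (fun i => rename (⇑g.symm) (X i + C (w i))) = fun i => X (g.symm i) + C (w i)
      from funext fun i => by simp]
  have step2 : aeval (fun i => X i + C ((w ∘ ⇑g) i)) F
      = aeval (fun i => X (g.symm i) + C (w i)) F := by
    conv_lhs => rw [← hsymF hF g.symm]
    rw [aeval_rename]
    rw [show ((fun i => X i + C ((w ∘ ⇑g) i)) ∘ ⇑g.symm) = fun i => X (g.symm i) + C (w i)
      from funext fun i => by simp]
  refine ⟨rename ⇑g.symm l1, rename ⇑g.symm l2, rename ⇑g.symm l3,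
    h1.rename_isHomogeneous, h2.rename_isHomogeneous, h3.rename_isHomogeneous, ?_, ?_⟩
  · have hmap := hli.map' (renameEquiv K (Equiv.symm g)).toLinearEquiv.toLinearMap
      (LinearEquiv.ker _)
    have hcomp : (⇑(renameEquiv K (Equiv.symm g)).toLinearEquiv.toLinearMap ∘ ![l1,l2,l3])
        = ![rename ⇑g.symm l1, rename ⇑g.symm l2, rename ⇑g.symm l3] := by
      funext i
      rcases (by decide : ∀ x : Fin 3, x = 0 ∨ x = 1 ∨ x = 2) i with rfl|rfl|rfl <;> rfl
    rwa [hcomp] at hmap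
  · show homogeneousComponent 2 (aeval (fun i => X i + C ((w ∘ ⇑g) i)) F) = _
    have hdec' : rename ⇑g.symm (aeval (fun i => X i + C (w i)) F)
        = rename ⇑g.symm l1 * rename ⇑g.symm l2 + (rename ⇑g.symm l3) ^ 2
          + rename ⇑g.symm P3 + rename ⇑g.symm P4 := by
      rw [hdec]; simp only [map_add, map_mul, map_pow]
    rw [step2, ← step1, hdec']
    exact comp2 ((h1.rename_isHomogeneous.mul h2.rename_isHomogeneous).add
      (h3.rename_isHomogeneous.pow 2)) hP3.rename_isHomogeneous hP4.rename_isHomogeneous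


end SXGMain

/-- for `c ≠ 0` in an algebraically closed field of characteristic 2, the
quartic `X_c = {cσ₁σ₃ + σ₄ = 0} ⊂ ℙ³` has exactly 10 singular points, namely the
`𝔖₄`-orbits of `(0,0,1,1)` (6 points) and `(0,0,0,1)` (4 points), and each singular point is
a node. -/
theorem stmt_16 (K : Type*) [Field K] [IsAlgClosed K] [CharP K 2]
    (c : K) (hc : c ≠ 0) (F : MvPolynomial (Fin 4) K)
    (hF : F = C c * esymm (Fin 4) K 1 * esymm (Fin 4) K 3 + esymm (Fin 4) K 4) :
    {p : Projectivization K (Fin 4 → K) |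
        eval p.rep F = 0 ∧ ∀ i, eval p.rep (pderiv i F) = 0} =
      {p : Projectivization K (Fin 4 → K) |
        ∃ (g : Equiv.Perm (Fin 4)) (t : K), t ≠ 0 ∧
          (p.rep = t • ((![0, 0, 1, 1] : Fin 4 → K) ∘ g) ∨
           p.rep = t • ((![0, 0, 0, 1] : Fin 4 → K) ∘ g))} ∧
    {p : Projectivization K (Fin 4 → K) |
        eval p.rep F = 0 ∧ ∀ i, eval p.rep (pderiv i F) = 0}.ncard = 10 ∧
    ∀ p : Projectivization K (Fin 4 → K),
      (eval p.rep F = 0 ∧ ∀ i, eval p.rep (pderiv i F) = 0) → IsNodeAt F p.rep := by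
  have hc2 : (2:K) = 0 := by
    have := CharP.cast_eq_zero K 2; exact_mod_cast this
  obtain ⟨r, hr⟩ : ∃ r : K, r ^ 2 = c := IsAlgClosed.exists_pow_nat_eq c zero_lt_two
  have hSmem : ∀ p : Projectivization K (Fin 4 → K),
      (eval p.rep F = 0 ∧ ∀ i, eval p.rep (pderiv i F) = 0) ↔ Concl p.rep := fun p =>
    ⟨fun h => classify hF hc hc2 p.rep p.rep_nonzero h.1 h.2,
     fun ⟨g, t, ht, h⟩ => sing_of hF hc2 p.rep g t h⟩
  refine ⟨Set.ext fun p => hSmem p, ?_, ?_⟩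
  · -- cardinality
    set S : Set (Projectivization K (Fin 4 → K)) :=
      {p | eval p.rep F = 0 ∧ ∀ i, eval p.rep (pderiv i F) = 0} with hSdef
    have key : ∀ p ∈ S, ∃ hu : boolToK K ∘ (zpat p.rep) ≠ 0,
        p = Projectivization.mk K (boolToK K ∘ (zpat p.rep)) hu := by
      intro p hp
      obtain ⟨g, t, ht, hcase⟩ := (hSmem p).1 hp
      rcases hcase with h'|h'
      · have hb : zpat p.rep = patB1 ∘ ⇑g := by rw [h']; exact zpatA ht g
        rw [hb, ← patKA_eq]
        exact ⟨patKA_ne g, mk_of_rep ht (patKA_ne g) h'⟩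
      · have hb : zpat p.rep = patB2 ∘ ⇑g := by rw [h']; exact zpatB ht g
        rw [hb, ← patKB_eq]
        exact ⟨patKB_ne g, mk_of_rep ht (patKB_ne g) h'⟩
    have hinj : Set.InjOn (fun p => zpat p.rep) S := by
      intro p hp q hq hpq
      obtain ⟨hup, ep⟩ := key p hp
      obtain ⟨huq, eq'⟩ := key q hq
      rw [ep, eq']
      exact mk_congr _ _ (by rw [show zpat p.rep = zpat q.rep from hpq])
    have himg : (fun p => zpat p.rep) '' S = ↑T := by
      ext b
      constructor
      · rintro ⟨p, hp, rfl⟩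
        obtain ⟨g, t, ht, hcase⟩ := (hSmem p).1 hp
        rcases hcase with h'|h'
        · have hb : zpat p.rep = patB1 ∘ ⇑g := by rw [h']; exact zpatA ht g
          show zpat p.rep ∈ ↑T
          rw [hb]; exact Finset.mem_coe.mpr (bool1 g).1
        · have hb : zpat p.rep = patB2 ∘ ⇑g := by rw [h']; exact zpatB ht g
          show zpat p.rep ∈ ↑T
          rw [hb]; exact Finset.mem_coe.mpr (bool1 g).2
      · intro hb
        obtain ⟨g, hg⟩ := bool2 b (Finset.mem_coe.mp hb)
        rcases hg with rfl|rfl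
        · obtain ⟨a, ha⟩ := rep_of_mk (patKA_ne (K := K) g)
          refine ⟨Projectivization.mk K ((![0,0,1,1] : Fin 4 → K) ∘ ⇑g) (patKA_ne g),
            (hSmem _).2 ⟨g, a, a.ne_zero, Or.inl ha⟩, ?_⟩
          show zpat _ = _
          rw [ha]; exact zpatA a.ne_zero g
        · obtain ⟨a, ha⟩ := rep_of_mk (patKB_ne (K := K) g)
          refine ⟨Projectivization.mk K ((![0,0,0,1] : Fin 4 → K) ∘ ⇑g) (patKB_ne g),
            (hSmem _).2 ⟨g, a, a.ne_zero, Or.inr ha⟩, ?_⟩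
          show zpat _ = _
          rw [ha]; exact zpatB a.ne_zero g
    calc S.ncard = ((fun p => zpat p.rep) '' S).ncard := (Set.ncard_image_of_injOn hinj).symm
      _ = (↑T : Set (Fin 4 → Bool)).ncard := by rw [himg]
      _ = T.card := Set.ncard_coe_finset T
      _ = 10 := cardT
  · -- nodes
    intro p hp
    obtain ⟨g, t, ht, hcase⟩ := (hSmem p).1 hp
    rcases hcase with h'|h'
    · rw [h', smul_patA]
      exact node_transfer hF _ g _ _ _ _ _ (homLA1 c t) (homLA2 c t) (homLA3 c t)
        (homGA3 c t) (homG4 c) (liA hc ht) (decompA hF hc2 t)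
    · rw [h', smul_patB]
      exact node_transfer hF _ g _ _ _ _ _ (homLB1 c t) homLB2 (homLB3 t r)
        (homGB3 c t) (homG4 c) (liB hc ht hr) (decompB hF hc2 t r hr)
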